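/- Let P and Q be product distributions over {0,1}^n, where the i-th coordinate of P is Bernoulli with expectation p_i ∈ [0,1] and the i-th coordinate of Q is Bernoulli with expectation q_i, and suppose 0 < q_i ≤ 1/2 for all i. Then H²(P, Q) ≤ Σ_{i=1}^{n} (p_i − q_i)² / q_i. -/

import Mathlib

/-- The squared Hellinger distance `H²(p,q) = 1 - ∑ₖ √(pₖ qₖ)` between two
probability mass functions on a finite type. -/
noncomputable def sqHellinger {α : Type*} [Fintype α] (p q : α → ℝ) : ℝ :=
  1 - ∑ k, Real.sqrt (p k * q k)

/-- The product distribution over `{0,1}ⁿ` with Bernoulli parameters `r 0, …, r (n-1)`: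
it assigns to `x ∈ {0,1}ⁿ` the probability `∏ i, r i ^ (x i) * (1 - r i) ^ (1 - x i)`. -/
noncomputable def prodBern {n : ℕ} (r : Fin n → ℝ) : (Fin n → Bool) → ℝ :=
  fun x => ∏ i, if x i then r i else 1 - r i

lemma bern_bounds (p q : ℝ) (hp0 : 0 ≤ p) (hp1 : p ≤ 1) (hq0 : 0 < q) (hq2 : q ≤ 1/2) :
    Real.sqrt (p*q) + Real.sqrt ((1-p)*(1-q)) ≤ 1 ∧
    1 - (Real.sqrt (p*q) + Real.sqrt ((1-p)*(1-q))) ≤ (p - q)^2 / q := by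
  have hp1' : (0:ℝ) ≤ 1 - p := by linarith
  have hq1' : (0:ℝ) ≤ 1 - q := by linarith
  set a := Real.sqrt p with ha
  set b := Real.sqrt q with hb
  set c := Real.sqrt (1-p) with hc
  set d := Real.sqrt (1-q) with hd
  have ha2 : a^2 = p := Real.sq_sqrt hp0
  have hb2 : b^2 = q := Real.sq_sqrt hq0.le
  have hc2 : c^2 = 1-p := Real.sq_sqrt hp1'
  have hd2 : d^2 = 1-q := Real.sq_sqrt hq1'
  have ha0 : 0 ≤ a := Real.sqrt_nonneg _
  have hb0 : 0 ≤ b := Real.sqrt_nonneg _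
  have hc0 : 0 ≤ c := Real.sqrt_nonneg _
  have hd0 : 0 ≤ d := Real.sqrt_nonneg _
  have h1 : Real.sqrt (p*q) = a*b := Real.sqrt_mul hp0 q
  have h2 : Real.sqrt ((1-p)*(1-q)) = c*d := Real.sqrt_mul hp1' (1-q)
  have hsum : a^2 + b^2 + c^2 + d^2 = 2 := by rw [ha2, hb2, hc2, hd2]; ring
  have key : 1 - (a*b + c*d) = ((a-b)^2 + (c-d)^2)/2 := by linear_combination -hsum / 2
  rw [h1, h2]
  constructor
  · nlinarith [sq_nonneg (a-b), sq_nonneg (c-d)]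
  · have bound1 : (a-b)^2 ≤ (p-q)^2 / q := by
      rw [le_div_iff₀ hq0]
      have e1 : (a-b)^2*(a+b)^2 = (p-q)^2 := by
        have : (a-b)^2*(a+b)^2 = (a^2-b^2)^2 := by ring
        rw [this, ha2, hb2]
      have hab : q ≤ (a+b)^2 := by nlinarith [mul_nonneg ha0 hb0]
      have := mul_le_mul_of_nonneg_left hab (sq_nonneg (a-b))
      linarith
    have hq1q : (0:ℝ) < 1 - q := by linarith
    have bound2 : (c-d)^2 ≤ (p-q)^2 / q := by
      have b2' : (c-d)^2 ≤ (p-q)^2 / (1-q) := by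
        rw [le_div_iff₀ hq1q]
        have e2 : (c-d)^2*(c+d)^2 = (p-q)^2 := by
          have : (c-d)^2*(c+d)^2 = (c^2-d^2)^2 := by ring
          rw [this, hc2, hd2]; ring
        have hcd : 1 - q ≤ (c+d)^2 := by nlinarith [mul_nonneg hc0 hd0]
        have := mul_le_mul_of_nonneg_left hcd (sq_nonneg (c-d))
        linarith
      have : (p-q)^2 / (1-q) ≤ (p-q)^2 / q :=
        div_le_div_of_nonneg_left (sq_nonneg _) hq0 (by linarith)
      linarith
    linarith

lemma sqrt_finset_prod {ι : Type*} (s : Finset ι) (f : ι → ℝ) (h : ∀ i ∈ s, 0 ≤ f i) :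
    Real.sqrt (∏ i ∈ s, f i) = ∏ i ∈ s, Real.sqrt (f i) := by
  induction s using Finset.cons_induction with
  | empty => simp
  | cons a s ha ih =>
    rw [Finset.prod_cons, Finset.prod_cons, Real.sqrt_mul (h a (Finset.mem_cons_self a s)),
      ih (fun i hi => h i (Finset.mem_cons_of_mem hi))]

lemma one_sub_prod_le_sum {n : ℕ} (B : Fin n → ℝ) (h0 : ∀ i, 0 ≤ B i) (h1 : ∀ i, B i ≤ 1) :
    1 - ∏ i, B i ≤ ∑ i, (1 - B i) := by
  induction n with
  | zero => simp
  | succ m ih =>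
    rw [Fin.prod_univ_succ, Fin.sum_univ_succ]
    have h := ih (fun i => B i.succ) (fun i => h0 _) (fun i => h1 _)
    have hP0 : 0 ≤ ∏ i, B (Fin.succ i) := Finset.prod_nonneg (fun i _ => h0 _)
    have hP1 : ∏ i, B (Fin.succ i) ≤ 1 :=
      Finset.prod_le_one (fun i _ => h0 _) (fun i _ => h1 _)
    have hmul : B 0 * (∏ i, B (Fin.succ i)) ≥ B 0 - 1 + ∏ i, B (Fin.succ i) := by
      have h2 : B 0 * (1 - ∏ i, B (Fin.succ i)) ≤ 1 * (1 - ∏ i, B (Fin.succ i)) :=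
        mul_le_mul_of_nonneg_right (h1 0) (by linarith)
      nlinarith
    linarith

/-- **Hellinger bound for product distributions over the hypercube.**
If `P` and `Q` are product distributions over `{0,1}ⁿ` with coordinate Bernoulli
expectations `p i ∈ [0,1]` and `q i ∈ (0, 1/2]`, then
`H²(P,Q) ≤ ∑ i, (p i - q i)² / q i`. -/
theorem sqHellinger_prodBern_le (n : ℕ) (p q : Fin n → ℝ)
    (hp : ∀ i, 0 ≤ p i ∧ p i ≤ 1)
    (hq : ∀ i, 0 < q i ∧ q i ≤ 1 / 2) :
    sqHellinger (prodBern p) (prodBern q) ≤ ∑ i, (p i - q i) ^ 2 / q i := by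
  set B : Fin n → ℝ := fun i => Real.sqrt (p i * q i) + Real.sqrt ((1 - p i) * (1 - q i))
    with hB
  have hkey : ∑ x : Fin n → Bool, Real.sqrt (prodBern p x * prodBern q x) = ∏ i, B i := by
    have step1 : ∀ x : Fin n → Bool, Real.sqrt (prodBern p x * prodBern q x)
        = ∏ i, (if x i then Real.sqrt (p i * q i) else Real.sqrt ((1 - p i) * (1 - q i))) := by
      intro x
      unfold prodBern
      rw [← Finset.prod_mul_distrib, sqrt_finset_prod]
      · refine Finset.prod_congr rfl fun i _ => ?_
        by_cases h : x i <;> simp [h]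
      · intro i _
        obtain ⟨h1, h2⟩ := hp i
        obtain ⟨h3, h4⟩ := hq i
        by_cases h : x i <;> simp [h]
        · exact mul_nonneg h1 h3.le
        · exact mul_nonneg (by linarith) (by linarith)
    simp_rw [step1]
    have hps : ∏ i, ∑ b : Bool, (if b then Real.sqrt (p i * q i)
          else Real.sqrt ((1 - p i) * (1 - q i)))
        = ∑ x : Fin n → Bool, ∏ i, (if x i then Real.sqrt (p i * q i)
          else Real.sqrt ((1 - p i) * (1 - q i))) :=
      Fintype.prod_sum fun (i : Fin n) (b : Bool) => if b then Real.sqrt (p i * q i)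
          else Real.sqrt ((1 - p i) * (1 - q i))
    rw [← hps]
    exact Finset.prod_congr rfl fun i _ => by rw [Fintype.sum_bool]; simp [hB]
  have hB0 : ∀ i, 0 ≤ B i := fun i =>
    add_nonneg (Real.sqrt_nonneg _) (Real.sqrt_nonneg _)
  have hB1 : ∀ i, B i ≤ 1 := fun i =>
    (bern_bounds (p i) (q i) (hp i).1 (hp i).2 (hq i).1 (hq i).2).1
  have h1 : 1 - ∏ i, B i ≤ ∑ i, (1 - B i) := one_sub_prod_le_sum B hB0 hB1
  unfold sqHellinger
  rw [hkey]
  refine le_trans h1 (Finset.sum_le_sum fun i _ => ?_)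
  exact (bern_bounds (p i) (q i) (hp i).1 (hp i).2 (hq i).1 (hq i).2).2
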